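/- Let l be a prime with l ∣ q − 1, D ∈ F_q[T] monic with l ∤ deg D, and γ ∈ F_q^× with γ ≢ (−1)^{deg D} mod (F_q^×)^l. Then [k((γD)^{1/l}) : k] = l where k = F_q(T), the infinite place of k is totally ramified in k((γD)^{1/l})/k, and the constant field of k((γD)^{1/l}) is F_q. -/

import Mathlib

set_option synthInstance.maxHeartbeats 1000000
set_option maxHeartbeats 1000000

private lemma aux_intDegree_pow {K : Type*} [Field K] {b : RatFunc K} (hb : b ≠ 0) (n : ℕ) :
    (b ^ n).intDegree = n * b.intDegree := by
  induction n with
  | zero => simpa using RatFunc.intDegree_one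
  | succ n ih =>
    rw [pow_succ, RatFunc.intDegree_mul (pow_ne_zero n hb) hb, ih]
    push_cast; ring

private lemma aux_no_root {K : Type*} [Field K] (l : ℕ) (hl : l.Prime) {c : K} (hc : c ≠ 0)
    {D : Polynomial K} (hD0 : D ≠ 0) (hln : ¬ l ∣ D.natDegree) :
    ∀ b : RatFunc K, b ^ l ≠ RatFunc.C c * algebraMap (Polynomial K) (RatFunc K) D := by
  intro b hb
  have hCc : (RatFunc.C c : RatFunc K) ≠ 0 := by
    simpa using hc
  have hDr : algebraMap (Polynomial K) (RatFunc K) D ≠ 0 := by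
    intro h
    exact hD0 (RatFunc.algebraMap_injective K (by rw [h, map_zero]))
  have hb0 : b ≠ 0 := by
    intro h
    rw [h, zero_pow hl.ne_zero] at hb
    exact (mul_ne_zero hCc hDr) hb.symm
  have hdeg := congrArg RatFunc.intDegree hb
  rw [aux_intDegree_pow hb0, RatFunc.intDegree_mul hCc hDr, RatFunc.intDegree_C,
    RatFunc.intDegree_polynomial, zero_add] at hdeg
  exact hln (Int.natCast_dvd_natCast.mp ⟨b.intDegree, hdeg.symm⟩)

/-- Let `k = F_q(T)`, `l` a prime with `l ∣ q − 1`, `D ∈ F_q[T]` monic with `l ∤ deg D`, and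
`γ ∈ F_q^×` with `γ ≢ (−1)^{deg D} mod (F_q^×)^l`.  Then `K = k((γD)^{1/l})` has degree `l`
over `k`, the infinite place of `k` is totally ramified in `K/k` (expressed below by the fact
that any valuation extending the infinity valuation takes on `(γD)^{1/l}` the value
`deg D / l`, of exact denominator `l` since `l ∤ deg D`), and the constant field of `K`
is `F_q`. -/
theorem stmt19 (F : Type*) [Field F] [Fintype F] [DecidableEq (RatFunc F)]
    (l : ℕ) (hl : l.Prime) (hlq : l ∣ Fintype.card F - 1)
    (D : Polynomial F) (hD : D.Monic) (hln : ¬ l ∣ D.natDegree)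
    (γ : Fˣ) (hγ : ¬ ∃ μ : Fˣ, γ = (-1 : Fˣ) ^ D.natDegree * μ ^ l)
    (Ω : Type*) [Field Ω] [Algebra F Ω] [Algebra (RatFunc F) Ω]
    [IsScalarTower F (RatFunc F) Ω]
    (y : Ω)
    (hy : y ^ l = algebraMap (RatFunc F) Ω
      (RatFunc.C (γ : F) * algebraMap (Polynomial F) (RatFunc F) D)) :
    Module.finrank (RatFunc F) ↥(IntermediateField.adjoin (RatFunc F) {y}) = l ∧
    (∀ w : Valuation Ω (WithZero (Multiplicative ℚ)),
      (∀ x : RatFunc F, w (algebraMap (RatFunc F) Ω x)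
          = WithZero.map' (AddMonoidHom.toMultiplicative (Int.castAddHom ℚ))
              (FunctionField.inftyValuation F x)) →
      w y = ((Multiplicative.ofAdd ((D.natDegree : ℚ) / l) : Multiplicative ℚ)
        : WithZero (Multiplicative ℚ))) ∧
    (∀ x : Ω, x ∈ IntermediateField.adjoin (RatFunc F) {y} → IsAlgebraic F x →
      ∃ c : F, x = algebraMap F Ω c) := by
  classical
  have hγ0 : (γ : F) ≠ 0 := γ.ne_zero
  have hD0 : D ≠ 0 := hD.ne_zero
  set a : RatFunc F := RatFunc.C (γ : F) * algebraMap (Polynomial F) (RatFunc F) D with ha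
  have hCc : (RatFunc.C (γ : F) : RatFunc F) ≠ 0 := by simpa using hγ0
  have hDr : algebraMap (Polynomial F) (RatFunc F) D ≠ 0 := by
    intro h
    exact hD0 (RatFunc.algebraMap_injective F (by rw [h, map_zero]))
  have ha0 : a ≠ 0 := mul_ne_zero hCc hDr
  have haux : ∀ b : RatFunc F, b ^ l ≠ a := aux_no_root l hl hγ0 hD0 hln
  have hPirr : Irreducible (Polynomial.X ^ l - Polynomial.C a) :=
    X_pow_sub_C_irreducible_of_prime hl haux
  have hmonic : (Polynomial.X ^ l - Polynomial.C a).Monic :=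
    Polynomial.monic_X_pow_sub_C a hl.ne_zero
  have hroot : Polynomial.aeval y (Polynomial.X ^ l - Polynomial.C a) = 0 := by
    simp [hy, ha]
  have hint : IsIntegral (RatFunc F) y :=
    ⟨Polynomial.X ^ l - Polynomial.C a, hmonic, by rw [← Polynomial.aeval_def]; exact hroot⟩
  have hminpoly : minpoly (RatFunc F) y = Polynomial.X ^ l - Polynomial.C a :=
    (minpoly.eq_of_irreducible_of_monic hPirr hroot hmonic).symm
  have h1 : Module.finrank (RatFunc F) ↥(IntermediateField.adjoin (RatFunc F) {y}) = l := by
    rw [IntermediateField.adjoin.finrank hint, hminpoly, Polynomial.natDegree_X_pow_sub_C]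
  refine ⟨h1, ?_, ?_⟩
  · -- the valuation statement
    intro w hw
    have hval : (w y) ^ l
        = ((Multiplicative.ofAdd ((D.natDegree : ℚ)) : Multiplicative ℚ)
          : WithZero (Multiplicative ℚ)) := by
      rw [← map_pow, hy, hw]
      have h2 : FunctionField.inftyValuation F a
          = ((Multiplicative.ofAdd ((D.natDegree : ℤ)) : Multiplicative ℤ)
            : WithZero (Multiplicative ℤ)) := by
        show RatFunc.inftyValuation F a = _
        rw [RatFunc.inftyValuation_apply, RatFunc.inftyValuation_of_nonzero F ha0]
        rw [ha, RatFunc.intDegree_mul hCc hDr, RatFunc.intDegree_C,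
          RatFunc.intDegree_polynomial, zero_add]
        rfl
      rw [h2, WithZero.map'_coe]
      rfl
    have hwy0 : w y ≠ 0 := by
      intro h
      rw [h, zero_pow hl.ne_zero] at hval
      exact WithZero.zero_ne_coe hval
    obtain ⟨u, hu⟩ := WithZero.ne_zero_iff_exists.mp hwy0
    rw [← hu] at hval ⊢
    rw [← WithZero.coe_pow, WithZero.coe_inj] at hval
    have htoadd := congrArg Multiplicative.toAdd hval
    rw [toAdd_pow, toAdd_ofAdd] at htoadd
    have hl0 : (l : ℚ) ≠ 0 := Nat.cast_ne_zero.mpr hl.ne_zero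
    have hu' : Multiplicative.toAdd u = (D.natDegree : ℚ) / l := by
      field_simp
      rw [← htoadd, nsmul_eq_mul]
      ring
    rw [WithZero.coe_inj, ← ofAdd_toAdd u, hu']
  · -- the constant field statement
    intro x hxK hxalgF
    have hT : Transcendental F (algebraMap (RatFunc F) Ω RatFunc.X) := by
      have hX : Transcendental F (RatFunc.X : RatFunc F) := by
        rw [← RatFunc.algebraMap_X]
        intro h
        exact Polynomial.transcendental_X F
          ((isAlgebraic_algebraMap_iff (RatFunc.algebraMap_injective F)).mp h)
      intro h
      exact hX ((isAlgebraic_algebraMap_iff (algebraMap (RatFunc F) Ω).injective).mp h)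
    have hxint : IsIntegral F x := hxalgF.isIntegral
    set E : IntermediateField F Ω := IntermediateField.adjoin F {x} with hE
    haveI : FiniteDimensional F E := IntermediateField.adjoin.finiteDimensional hxint
    haveI : Algebra.IsIntegral F E := Algebra.IsIntegral.of_finite F E
    set t : Ω := algebraMap (RatFunc F) Ω RatFunc.X with ht
    have htE : Transcendental E t := by
      intro h
      exact hT (isIntegral_trans t h.isIntegral).isAlgebraic
    set g : Polynomial E →+* Ω := Polynomial.eval₂RingHom (algebraMap E Ω) t with hg
    have hgaeval : ∀ p : Polynomial E, g p = Polynomial.aeval t p := by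
      intro p; rw [Polynomial.aeval_def]; rfl
    have hginj : Function.Injective g := by
      rw [injective_iff_map_eq_zero]
      intro p hp
      by_contra hp0
      exact htE ⟨p, hp0, by rw [← hgaeval p]; exact hp⟩
    set ψ : RatFunc E →+* Ω := IsFractionRing.lift hginj with hψ
    have hψinj : Function.Injective ψ := ψ.injective
    have hcomp : ∀ p : Polynomial F,
        algebraMap (RatFunc F) Ω (algebraMap (Polynomial F) (RatFunc F) p)
          = ψ (algebraMap (Polynomial E) (RatFunc E) (Polynomial.map (algebraMap F E) p)) := by
      intro p
      rw [hψ, IsFractionRing.lift_algebraMap, hgaeval, Polynomial.aeval_map_algebraMap]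
      induction p using Polynomial.induction_on' with
      | add p q hp hq => rw [map_add, map_add, map_add, hp, hq]
      | monomial n c =>
        rw [← Polynomial.C_mul_X_pow_eq_monomial]
        simp only [map_mul, map_pow, Polynomial.aeval_X, Polynomial.aeval_C,
          RatFunc.algebraMap_C, RatFunc.algebraMap_X, ← ht]
        congr 1
        simp only [← RatFunc.algebraMap_eq_C, ← IsScalarTower.algebraMap_apply]
    have hmemS : ∀ z : RatFunc F, algebraMap (RatFunc F) Ω z ∈ ψ.fieldRange := by
      intro z
      induction z using RatFunc.induction_on with
      | f p q hq =>
        rw [map_div₀, hcomp p, hcomp q]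
        exact div_mem ⟨_, rfl⟩ ⟨_, rfl⟩
    set M : IntermediateField (RatFunc F) Ω := Subfield.toIntermediateField ψ.fieldRange hmemS
      with hM
    have hxM : x ∈ M := by
      have hxE : x ∈ E := IntermediateField.mem_adjoin_simple_self F x
      refine ⟨algebraMap (Polynomial E) (RatFunc E) (Polynomial.C ⟨x, hxE⟩), ?_⟩
      rw [hψ, IsFractionRing.lift_algebraMap, hgaeval, Polynomial.aeval_C]
      rfl
    haveI : FiniteDimensional (RatFunc F) ↥(IntermediateField.adjoin (RatFunc F) {y}) :=
      FiniteDimensional.of_finrank_pos (h1 ▸ hl.pos)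
    have hle : IntermediateField.adjoin (RatFunc F) {x}
        ≤ IntermediateField.adjoin (RatFunc F) {y} :=
      IntermediateField.adjoin_le_iff.mpr (by simpa using hxK)
    have hdvd : Module.finrank (RatFunc F) ↥(IntermediateField.adjoin (RatFunc F) {x}) ∣ l := by
      rw [← h1]
      exact dvd_of_mul_right_eq _ (IntermediateField.finrank_bot_mul_relfinrank hle)
    rcases hl.eq_one_or_self_of_dvd _ hdvd with hone | hfull
    · -- `x` lies in the base field `k = F(T)`, hence is a constant
      have hbot : IntermediateField.adjoin (RatFunc F) {x} = ⊥ :=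
        IntermediateField.finrank_eq_one_iff.mp hone
      have hxbot : x ∈ (⊥ : IntermediateField (RatFunc F) Ω) :=
        hbot ▸ IntermediateField.mem_adjoin_simple_self _ x
      rw [IntermediateField.mem_bot] at hxbot
      obtain ⟨z, hz⟩ := hxbot
      have hzalg : IsAlgebraic F z :=
        (isAlgebraic_algebraMap_iff (algebraMap (RatFunc F) Ω).injective).mp (hz ▸ hxalgF)
      have hzint : IsIntegral (Polynomial F) z := hzalg.isIntegral.tower_top
      obtain ⟨p, hp⟩ := IsIntegrallyClosed.isIntegral_iff.mp hzint
      have hpalg : IsAlgebraic F p :=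
        (isAlgebraic_algebraMap_iff (RatFunc.algebraMap_injective F)).mp (hp ▸ hzalg)
      have hpdeg : p.natDegree = 0 := by
        by_contra hd
        have hplc : p.leadingCoeff ∈ nonZeroDivisors F :=
          mem_nonZeroDivisors_of_ne_zero (Polynomial.leadingCoeff_ne_zero.mpr
            (fun h0 => hd (by simp [h0])))
        exact Polynomial.transcendental p hd hplc hpalg
      refine ⟨p.coeff 0, ?_⟩
      rw [Polynomial.eq_C_of_natDegree_eq_zero hpdeg] at hp
      rw [← hz, ← hp, RatFunc.algebraMap_C, ← RatFunc.algebraMap_eq_C,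
        ← IsScalarTower.algebraMap_apply]
    · -- the impossible case where `x` generates the whole degree-`l` extension
      exfalso
      have hKeq : IntermediateField.adjoin (RatFunc F) {x}
          = IntermediateField.adjoin (RatFunc F) {y} :=
        IntermediateField.eq_of_le_of_finrank_eq hle (hfull.trans h1.symm)
      have hyM : y ∈ M := by
        have hy' : y ∈ IntermediateField.adjoin (RatFunc F) {x} :=
          hKeq ▸ IntermediateField.mem_adjoin_simple_self _ y
        exact IntermediateField.adjoin_le_iff.mpr (by simpa using hxM) hy'
      obtain ⟨r, hr⟩ := hyM
      have hkey : ψ (r ^ l) = ψ (RatFunc.C (algebraMap F E (γ : F))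
          * algebraMap (Polynomial E) (RatFunc E) (Polynomial.map (algebraMap F E) D)) := by
        rw [map_pow]
        show (ψ r) ^ l = _
        rw [hr, hy, map_mul, map_mul]
        congr 1
        · have hc := hcomp (Polynomial.C (γ : F))
          rw [RatFunc.algebraMap_C, Polynomial.map_C, RatFunc.algebraMap_C] at hc
          exact hc
        · exact hcomp D
      have heq := hψinj hkey
      have hγE : algebraMap F E (γ : F) ≠ 0 := by
        simpa using γ.ne_zero
      have hDE : Polynomial.map (algebraMap F E) D ≠ 0 := (hD.map _).ne_zero
      have hdegE : ¬ l ∣ (Polynomial.map (algebraMap F E) D).natDegree := by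
        rwa [hD.natDegree_map]
      exact aux_no_root l hl hγE hDE hdegE r heq
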